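/- For L > 0, the number of solutions y > 0 of the equation (y/sin(y))² = L² subject to cot(y) < 0 equals ⌈L/π − 1/2⌉. -/

import Mathlib

open Real Set

noncomputable def gfun (L : ℝ) (k : ℕ) (x : ℝ) : ℝ := k * π + x - L * Real.sin x

lemma gfun_mono (L : ℝ) (hL : 0 < L) (k : ℕ) :
    StrictMonoOn (gfun L k) (Icc (π/2) π) := by
  apply strictMonoOn_of_deriv_pos (convex_Icc _ _)
  · unfold gfun; fun_prop
  · intro x hx
    rw [interior_Icc] at hx
    have hcos : Real.cos x < 0 :=
      Real.cos_neg_of_pi_div_two_lt_of_lt hx.1 (by linarith [Real.pi_pos, hx.2])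
    have hd : HasDerivAt (gfun L k) (1 - L * Real.cos x) x := by
      exact
        (((hasDerivAt_id x).const_add ((k : ℝ) * π)).sub
          ((Real.hasDerivAt_sin x).const_mul L))
    rw [hd.deriv]
    nlinarith [mul_neg_of_pos_of_neg hL hcos]

lemma gfun_exists (L : ℝ) (hL : 0 < L) (k : ℕ) (h : (k : ℝ) * π + π / 2 < L) :
    ∃ x ∈ Ioo (π/2) π, gfun L k x = 0 := by
  have hpi := Real.pi_pos
  have h1 : gfun L k (π/2) < 0 := by simp [gfun]; linarith
  have h2 : 0 < gfun L k π := by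
    simp [gfun]; positivity
  have hcont : ContinuousOn (gfun L k) (Icc (π/2) π) := by unfold gfun; fun_prop
  obtain ⟨x, hx, hgx⟩ :=
    intermediate_value_Ioo (by linarith : π/2 ≤ π) hcont ⟨h1, h2⟩
  exact ⟨x, hx, hgx⟩

set_option maxHeartbeats 1000000 in
/-- Characterization of the solution set. -/
lemma mem_S_iff (L : ℝ) (hL : 0 < L) (y : ℝ) :
    (0 < y ∧ Real.sin y ≠ 0 ∧ (y / Real.sin y) ^ 2 = L ^ 2 ∧
        Real.cos y / Real.sin y < 0) ↔
    ∃ k : ℕ, (y - k * π) ∈ Ioo (π/2) π ∧ gfun L k (y - k * π) = 0 := by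
  have hpi := Real.pi_pos
  constructor
  · rintro ⟨hy, hs, heq, hcot⟩
    have hm0 : (0:ℤ) ≤ ⌊y / π⌋ := Int.floor_nonneg.2 (by positivity)
    set k : ℕ := ⌊y / π⌋.toNat with hk
    have hkr : (k : ℝ) = ((⌊y / π⌋ : ℤ) : ℝ) := by
      rw [hk]; exact_mod_cast Int.toNat_of_nonneg hm0
    have hle : (k : ℝ) * π ≤ y := by
      rw [hkr]
      have h1 : ((⌊y / π⌋ : ℤ) : ℝ) ≤ y / π := Int.floor_le (y / π)
      nlinarith [mul_le_mul_of_nonneg_right h1 hpi.le, (div_mul_cancel₀ y hpi.ne')]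
    have hlt : (k:ℝ) * π < y := by
      rcases lt_or_eq_of_le hle with h | h
      · exact h
      · exact absurd (Real.sin_eq_zero_iff.2 ⟨(k:ℤ), by push_cast; linarith⟩) hs
    have hup : y < ((k:ℝ) + 1) * π := by
      have h1 : y / π < ((⌊y / π⌋ : ℤ) : ℝ) + 1 := Int.lt_floor_add_one (y / π)
      rw [hkr]
      nlinarith [mul_lt_mul_of_pos_right h1 hpi, (div_mul_cancel₀ y hpi.ne')]
    set x : ℝ := y - k * π with hxdef
    have hyx : y = x + k * π := by rw [hxdef]; ring
    have hx0 : 0 < x := by rw [hxdef]; linarith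
    have hxpi : x < π := by rw [hxdef]; nlinarith
    have hsinx : 0 < Real.sin x := Real.sin_pos_of_pos_of_lt_pi hx0 hxpi
    have hsy : Real.sin y = (-1) ^ k * Real.sin x := by
      rw [hyx]; exact Real.sin_add_nat_mul_pi x k
    have hcy : Real.cos y = (-1) ^ k * Real.cos x := by
      rw [hyx]; exact Real.cos_add_nat_mul_pi x k
    have hsgn : ((-1:ℝ) ^ k) ^ 2 = 1 := by
      rcases Nat.even_or_odd k with he | ho
      · rw [he.neg_one_pow]; norm_num
      · rw [ho.neg_one_pow]; norm_num
    have hcotx : Real.cos x / Real.sin x < 0 := by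
      have : Real.cos y / Real.sin y = Real.cos x / Real.sin x := by
        rw [hsy, hcy, mul_div_mul_left]
        rcases Nat.even_or_odd k with he | ho
        · rw [he.neg_one_pow]; norm_num
        · rw [ho.neg_one_pow]; norm_num
      linarith [this ▸ hcot]
    have hcx : Real.cos x < 0 := by
      by_contra hc
      push_neg at hc
      exact absurd (div_nonneg hc hsinx.le) (not_le.2 hcotx)
    have hxhalf : π/2 < x := by
      by_contra hc
      push_neg at hc
      exact absurd (Real.cos_nonneg_of_mem_Icc ⟨by linarith, hc⟩) (not_le.2 hcx)
    -- the equation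
    have hy2 : y ^ 2 = L ^ 2 * Real.sin y ^ 2 := by
      have h1 : (y / Real.sin y) ^ 2 = y ^ 2 / Real.sin y ^ 2 := by ring
      rw [h1] at heq
      field_simp at heq
      linarith [heq]
    have hsy2 : Real.sin y ^ 2 = Real.sin x ^ 2 := by
      rw [hsy]; rw [mul_pow, hsgn, one_mul]
    have hyeq : y = L * Real.sin x := by
      have h2 : (y - L * Real.sin x) * (y + L * Real.sin x) = 0 := by
        linear_combination hy2 + L ^ 2 * hsy2
      rcases mul_eq_zero.1 h2 with h | h
      · linarith
      · linarith [mul_pos hL hsinx]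
    refine ⟨k, ⟨hxhalf, hxpi⟩, ?_⟩
    show (k:ℝ) * π + x - L * Real.sin x = 0
    rw [← hyeq]; linarith
  · rintro ⟨k, ⟨hx1, hx2⟩, hg⟩
    set x : ℝ := y - k * π with hxdef
    have hyx : y = x + k * π := by rw [hxdef]; ring
    have hsinx : 0 < Real.sin x := Real.sin_pos_of_pos_of_lt_pi (by linarith [Real.pi_pos]) hx2
    have hcx : Real.cos x < 0 :=
      Real.cos_neg_of_pi_div_two_lt_of_lt hx1 (by linarith [Real.pi_pos])
    have hyeq : y = L * Real.sin x := by
      have h := hg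
      unfold gfun at h
      linarith
    have hsy : Real.sin y = (-1) ^ k * Real.sin x := by
      rw [hyx]; exact Real.sin_add_nat_mul_pi x k
    have hcy : Real.cos y = (-1) ^ k * Real.cos x := by
      rw [hyx]; exact Real.cos_add_nat_mul_pi x k
    have hy0 : 0 < y := by rw [hyeq]; positivity
    have hsne : Real.sin y ≠ 0 := by
      rw [hsy]
      rcases Nat.even_or_odd k with he | ho
      · rw [he.neg_one_pow]; simpa using hsinx.ne'
      · rw [ho.neg_one_pow]; simp; exact hsinx.ne'
    refine ⟨hy0, hsne, ?_, ?_⟩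
    · have hsgn : ((-1:ℝ) ^ k) ^ 2 = 1 := by
        rcases Nat.even_or_odd k with he | ho
        · rw [he.neg_one_pow]; norm_num
        · rw [ho.neg_one_pow]; norm_num
      rw [hsy, hyeq, div_pow, mul_pow, mul_pow, hsgn, one_mul,
        mul_div_assoc, div_self (pow_ne_zero 2 hsinx.ne'), mul_one]
    · have : Real.cos y / Real.sin y = Real.cos x / Real.sin x := by
        rw [hsy, hcy, mul_div_mul_left]
        rcases Nat.even_or_odd k with he | ho
        · rw [he.neg_one_pow]; norm_num
        · rw [ho.neg_one_pow]; norm_num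
      rw [this]
      exact div_neg_of_neg_of_pos hcx hsinx

set_option maxHeartbeats 1000000 in
/-- For `L > 0`, the number of solutions `y > 0` of `(y / sin y)² = L²` with `cot y < 0`
(considered only where `sin y ≠ 0`) equals `⌈L/π − 1/2⌉`. -/
theorem stmt_1 (L : ℝ) (hL : 0 < L) :
    (({y : ℝ | 0 < y ∧ Real.sin y ≠ 0 ∧ (y / Real.sin y) ^ 2 = L ^ 2 ∧
        Real.cos y / Real.sin y < 0}).ncard : ℤ) = ⌈L / Real.pi - 1 / 2⌉ := by
  have hpi := Real.pi_pos
  set n : ℕ := (⌈L / π - 1/2⌉).toNat with hn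
  have hLpi : (L/π)*π = L := div_mul_cancel₀ L hpi.ne'
  have hmemT : ∀ k : ℕ, ((k:ℝ) * π + π/2 < L ↔ k < n) := by
    intro k
    rw [hn, Nat.lt_iff_add_one_le]
    rw [show k + 1 ≤ (⌈L / π - 1/2⌉).toNat ↔ k < (⌈L / π - 1/2⌉).toNat from
      Nat.succ_le_iff]
    rw [Int.lt_toNat, Int.lt_ceil]
    push_cast
    constructor <;> intro h <;> nlinarith
  have hex : ∀ k : ℕ, ∃ x : ℝ, (k:ℝ)*π + π/2 < L →
      (x ∈ Set.Ioo (π/2) π ∧ gfun L k x = 0) := by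
    intro k
    by_cases h : (k:ℝ)*π + π/2 < L
    · obtain ⟨x, hx, hgx⟩ := gfun_exists L hL k h
      exact ⟨x, fun _ => ⟨hx, hgx⟩⟩
    · exact ⟨0, fun h' => absurd h' h⟩
  choose F hF using hex
  have key : {y : ℝ | 0 < y ∧ Real.sin y ≠ 0 ∧ (y / Real.sin y) ^ 2 = L ^ 2 ∧
        Real.cos y / Real.sin y < 0} =
      (fun k : ℕ => (k:ℝ) * π + F k) '' (Set.Iio n) := by
    ext y
    rw [Set.mem_setOf_eq, mem_S_iff L hL y]
    constructor
    · rintro ⟨k, hx, hg⟩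
      have hkL : (k:ℝ)*π + π/2 < L := by
        have hsin : Real.sin (y - k*π) ≤ 1 := Real.sin_le_one _
        have hg' := hg
        unfold gfun at hg'
        nlinarith [hx.1]
      obtain ⟨hFk, hgFk⟩ := hF k hkL
      have hinj := (gfun_mono L hL k).injOn
      have heqx : y - k*π = F k := by
        apply hinj (Set.Ioo_subset_Icc_self hx) (Set.Ioo_subset_Icc_self hFk)
        rw [hg, hgFk]
      exact ⟨k, (hmemT k).1 hkL, by show (k:ℝ)*π + F k = y; rw [← heqx]; ring⟩
    · rintro ⟨k, hk, rfl⟩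
      have hkL : (k:ℝ)*π + π/2 < L := (hmemT k).2 hk
      obtain ⟨hFk, hgFk⟩ := hF k hkL
      have hxeq : (k:ℝ)*π + F k - k*π = F k := by ring
      exact ⟨k, by rw [hxeq]; exact hFk, by rw [hxeq]; exact hgFk⟩
  rw [key]
  have hinj : Set.InjOn (fun k : ℕ => (k:ℝ) * π + F k) (Set.Iio n) := by
    intro k hk k' hk' heq
    simp only at heq
    obtain ⟨hFk, _⟩ := hF k ((hmemT k).2 hk)
    obtain ⟨hFk', _⟩ := hF k' ((hmemT k').2 hk')
    rcases lt_trichotomy k k' with h | h | h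
    · exfalso
      have hc : (k:ℝ) + 1 ≤ k' := by exact_mod_cast h
      nlinarith [hFk.1, hFk.2, hFk'.1, hFk'.2]
    · exact h
    · exfalso
      have hc : (k':ℝ) + 1 ≤ k := by exact_mod_cast h
      nlinarith [hFk.1, hFk.2, hFk'.1, hFk'.2]
  rw [Set.ncard_image_of_injOn hinj]
  have hIio : (Set.Iio n).ncard = n := by
    rw [← Finset.coe_range, Set.ncard_coe_finset, Finset.card_range]
  rw [hIio, hn]
  have h0 : (0:ℤ) ≤ ⌈L / π - 1/2⌉ := by
    have : (-1:ℤ) < ⌈L / π - 1/2⌉ := Int.lt_ceil.2 (by push_cast; nlinarith [div_pos hL hpi])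
    omega
  exact Int.toNat_of_nonneg h0
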